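/- Explicit sandpile solution on ℤ, first stage: with weights w_{xy} = 1 iff |x-y| = 1, source f(t,x) = α·1_{{0}}(x) (α>0), and u₀ = 0, the function u(t,x) = αt·1_{{0}}(x) is, for 0 ≤ t ≤ 1/α, a strong solution of the sandpile limit problem, i.e. u(t) ∈ K_∞^G and ∫_V (f(t,x)-u_t(t,x))(v(x)-u(t,x)) dν_G(x) ≤ 0 for every v ∈ K_∞^G. -/
import Mathlib


/-- First stage of the explicit sandpile solution on ℤ: u(t,x) = αt·1_{0}(x) is a
strong solution for 0 ≤ t ≤ 1/α. -/
theorem stmt16 (α : ℝ) (hα : 0 < α)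
    (u : ℝ → ℤ → ℝ) (hu : ∀ t x, u t x = if x = 0 then α * t else 0)
    (f : ℤ → ℝ) (hf : ∀ x, f x = if x = 0 then α else 0)
    (ut : ℤ → ℝ) (hut : ∀ x, ut x = if x = 0 then α else 0) :
    ∀ t : ℝ, 0 ≤ t → t ≤ 1 / α →
      (∀ x : ℤ, HasDerivAt (fun s => u s x) (ut x) t) ∧
      -- u(t) ∈ K_∞^G
      ((Summable fun x : ℤ => (u t x) ^ 2 * 2) ∧
        ∀ x y : ℤ, |x - y| = 1 → |u t y - u t x| ≤ 1) ∧
      -- variational inequality against every v ∈ K_∞^G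
      (∀ v : ℤ → ℝ, (Summable fun x : ℤ => (v x) ^ 2 * 2) →
        (∀ x y : ℤ, |x - y| = 1 → |v y - v x| ≤ 1) →
          ∑' x : ℤ, (f x - ut x) * (v x - u t x) * 2 ≤ 0) := by
  intro t ht ht'
  have hαt : α * t ≤ 1 := by
    have : α * (1/α) = 1 := by field_simp
    nlinarith
  have hαt0 : 0 ≤ α * t := mul_nonneg hα.le ht
  refine ⟨?_, ⟨?_, ?_⟩, ?_⟩
  · intro x
    rw [hut]
    by_cases hx : x = 0
    · simp only [hx, if_true]
      have : (fun s => u s (0 : ℤ)) = fun s => α * s := by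
        ext s; rw [hu]; simp
      rw [this]
      simpa using (hasDerivAt_id t).const_mul α
    · simp only [hx, if_false]
      have : (fun s => u s x) = fun _ => (0 : ℝ) := by
        ext s; rw [hu]; simp [hx]
      rw [this]; exact hasDerivAt_const t 0
  · apply summable_of_finite_support
    apply Set.Finite.subset (Set.finite_singleton (0 : ℤ))
    intro x hx
    simp only [Function.mem_support, ne_eq] at hx
    by_contra h
    apply hx
    simp at h; rw [hu]; simp [h]
  · intro x y _
    rw [hu, hu]
    by_cases hx : x = 0 <;> by_cases hy : y = 0 <;>
      simp [hx, hy, abs_of_nonneg hαt0] <;> linarith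
  · intro v _ _
    have : (fun x : ℤ => (f x - ut x) * (v x - u t x) * 2) = fun _ => 0 := by
      ext x; rw [hf, hut]; ring_nf
    rw [this, tsum_zero]
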